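/- Let M be a Λ-module such that S_M is a minimal infinite submodule-closed subcategory of mod Λ. Then M is not of finite type, i.e., M is not a direct sum of copies of finitely many finite-length modules. -/

import Mathlib

open Function

universe v

/-- `X` is cogenerated by `M`: `X` embeds into a finite direct power of `M`. -/
def Cogen (L : Type v) [Ring L] (M : Type v) [AddCommGroup M] [Module L M]
    (X : Type v) [AddCommGroup X] [Module L X] : Prop :=
  ∃ (r : ℕ) (f : X →ₗ[L] (Fin r → M)), Function.Injective f

/-- A module is indecomposable: nonzero, and every idempotent endomorphism is `0` or `id`. -/
def Indec (L : Type v) [Ring L] (X : Type v) [AddCommGroup X] [Module L X] : Prop :=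
  (¬ Subsingleton X) ∧ ∀ e : X →ₗ[L] X, e ∘ₗ e = e → e = 0 ∨ e = (LinearMap.id : X →ₗ[L] X)

/-- A (full, additive) subcategory of `mod Λ`, given by a predicate on finite-length modules,
closed under isomorphisms, finite direct sums and submodules (hence direct summands). -/
structure IsSubcat (L : Type v) [Ring L] (P : ModuleCat.{v} L → Prop) : Prop where
  finLength : ∀ X : ModuleCat.{v} L, P X → IsFiniteLength L X
  isoClosed : ∀ X Y : ModuleCat.{v} L, Nonempty (X ≃ₗ[L] Y) → P X → P Y
  sumClosed : ∀ X Y : ModuleCat.{v} L, P X → P Y → P (ModuleCat.of L (X × Y))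
  submodClosed : ∀ X : ModuleCat.{v} L, P X → ∀ N : Submodule L X, P (ModuleCat.of L N)

/-- The subcategory `P` contains infinitely many isomorphism classes of indecomposables. -/
def InfiniteSubcat (L : Type v) [Ring L] (P : ModuleCat.{v} L → Prop) : Prop :=
  ¬ ∃ (n : ℕ) (Y : Fin n → ModuleCat.{v} L),
      ∀ X : ModuleCat.{v} L, P X → Indec L X → ∃ i, Nonempty (X ≃ₗ[L] Y i)

/-- `P` is a minimal infinite submodule-closed subcategory. -/
def IsMinimalInf (L : Type v) [Ring L] (P : ModuleCat.{v} L → Prop) : Prop :=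
  IsSubcat L P ∧ InfiniteSubcat L P ∧
    ∀ Q : ModuleCat.{v} L → Prop, (∀ X, Q X → P X) → IsSubcat L Q → InfiniteSubcat L Q →
      Q = P

/-- The subcategory `S_M` of finite-length modules cogenerated by `M`. -/
def SMod (L : Type v) [Ring L] (M : Type v) [AddCommGroup M] [Module L M] :
    ModuleCat.{v} L → Prop :=
  fun X => IsFiniteLength L X ∧ Cogen L M X

/-- `M` is of finite type: a direct sum of (possibly infinitely many) copies of finitely
many finite-length modules. -/
def IsFiniteType (L : Type v) [Ring L] (M : Type v) [AddCommGroup M] [Module L M] : Prop :=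
  ∃ (ι : Type v) (N : ι → ModuleCat.{v} L), (∀ i, IsFiniteLength L (N i)) ∧
    (∃ (n : ℕ) (Y : Fin n → ModuleCat.{v} L), ∀ i, ∃ j, Nonempty ((N i : Type v) ≃ₗ[L] Y j)) ∧
    Nonempty (M ≃ₗ[L] DirectSum ι (fun i => N i))

/-! ### Auxiliary machinery -/

section Aux

variable {L : Type v} [Ring L]

/-- Cogeneration with an arbitrary finite index type. -/
def CogenT (L : Type v) [Ring L] (W : Type v) [AddCommGroup W] [Module L W]
    (X : Type v) [AddCommGroup X] [Module L X] : Prop :=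
  ∃ (η : Type v) (_ : Finite η) (f : X →ₗ[L] (η → W)), Function.Injective f

variable {W X X' V : Type v} [AddCommGroup W] [Module L W] [AddCommGroup X] [Module L X]
  [AddCommGroup X'] [Module L X'] [AddCommGroup V] [Module L V]

theorem cogen_iff_cogenT : Cogen L W X ↔ CogenT L W X := by
  constructor
  · rintro ⟨r, f, hf⟩
    refine ⟨ULift.{v} (Fin r), inferInstance,
      (LinearEquiv.funCongrLeft L W (Equiv.ulift : ULift.{v} (Fin r) ≃ Fin r)).toLinearMap ∘ₗ f,
      ?_⟩
    intro a b hab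
    apply hf
    simp only [LinearMap.coe_comp, Function.comp_apply, LinearEquiv.coe_coe] at hab
    exact (LinearEquiv.funCongrLeft L W (Equiv.ulift : ULift.{v} (Fin r) ≃ Fin r)).injective hab
  · rintro ⟨η, hη, f, hf⟩
    haveI := hη
    haveI := Fintype.ofFinite η
    let e : (η → W) ≃ₗ[L] (Fin (Fintype.card η) → W) :=
      LinearEquiv.funCongrLeft L W (Fintype.equivFin η).symm
    exact ⟨Fintype.card η, e.toLinearMap ∘ₗ f, fun a b hab => hf (by
      have := congrArg e.symm hab
      simpa using this)⟩

theorem cogenT_of_injective (g : X' →ₗ[L] X) (hg : Function.Injective g)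
    (h : CogenT L W X) : CogenT L W X' := by
  obtain ⟨η, hη, f, hf⟩ := h
  exact ⟨η, hη, f ∘ₗ g, fun a b hab => hg (hf hab)⟩

theorem cogenT_trans (hXW : CogenT L W X) (hWV : CogenT L V W) : CogenT L V X := by
  obtain ⟨η, hη, f, hf⟩ := hXW
  obtain ⟨θ, hθ, g, hg⟩ := hWV
  haveI := hη; haveI := hθ
  refine ⟨η × θ, inferInstance, ?_, ?_⟩
  · exact
      { toFun := fun x p => g (f x p.1) p.2
        map_add' := by intro a b; funext p; simp
        map_smul' := by intro c a; funext p; simp }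
  · intro a b hab
    apply hf; funext i
    apply hg; funext j
    exact congrFun hab (i, j)

theorem cogenT_pi {τ : Type v} [Finite τ] (Xs : τ → Type v)
    [∀ i, AddCommGroup (Xs i)] [∀ i, Module L (Xs i)]
    (h : ∀ i, CogenT L W (Xs i)) : CogenT L W (∀ i, Xs i) := by
  choose η hη f hf using h
  haveI := hη
  refine ⟨Σ i, η i, inferInstance, ?_, ?_⟩
  · exact
      { toFun := fun v p => f p.1 (v p.1) p.2
        map_add' := by intro a b; funext p; simp
        map_smul' := by intro c a; funext p; simp }
  · intro a b hab
    funext i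
    apply hf i; funext j
    exact congrFun hab ⟨i, j⟩

theorem cogenT_prod (hX : CogenT L W X) (hX' : CogenT L W X') : CogenT L W (X × X') := by
  obtain ⟨η, hη, f, hf⟩ := hX
  obtain ⟨θ, hθ, g, hg⟩ := hX'
  haveI := hη; haveI := hθ
  refine ⟨η ⊕ θ, inferInstance, ?_, ?_⟩
  · exact
      { toFun := fun p => Sum.elim (f p.1) (g p.2)
        map_add' := by intro a b; funext s; rcases s with s | s <;> simp
        map_smul' := by intro c a; funext s; rcases s with s | s <;> simp }
  · intro a b hab
    have h1 : f a.1 = f b.1 := by funext i; exact congrFun hab (Sum.inl i)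
    have h2 : g a.2 = g b.2 := by funext j; exact congrFun hab (Sum.inr j)
    exact Prod.ext (hf h1) (hg h2)

theorem cogenT_of_emb (f : X →ₗ[L] W) (hf : Function.Injective f) : CogenT L W X :=
  ⟨PUnit.{v+1}, inferInstance,
    { toFun := fun x _ => f x
      map_add' := by intro a b; funext p; simp
      map_smul' := by intro c a; funext p; simp },
    fun a b hab => hf (congrFun hab PUnit.unit)⟩

theorem cogenT_self : CogenT L X X :=
  ⟨PUnit.{v+1}, inferInstance,
    { toFun := fun x _ => x
      map_add' := by intro a b; rfl
      map_smul' := by intro c a; rfl },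
    fun a b hab => congrFun hab PUnit.unit⟩

end Aux

/-! ### Ring-theoretic nilpotency machinery -/

section RingAux

variable {R : Type*} [Ring R]

theorem isNilpotent_mul_swap {a b : R} (h : IsNilpotent (a * b)) : IsNilpotent (b * a) := by
  obtain ⟨n, hn⟩ := h
  refine ⟨n + 1, ?_⟩
  have key : ∀ m : ℕ, (b * a) ^ (m + 1) = b * (a * b) ^ m * a := by
    intro m
    induction m with
    | zero => simp
    | succ m ih =>
      calc (b * a) ^ (m + 1 + 1) = (b * a) ^ (m + 1) * (b * a) := by rw [pow_succ]
        _ = (b * (a * b) ^ m * a) * (b * a) := by rw [ih]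
        _ = b * ((a * b) ^ m * (a * b)) * a := by noncomm_ring
        _ = b * (a * b) ^ (m + 1) * a := by rw [pow_succ]
  rw [key n, hn, mul_zero, zero_mul]

theorem jq_add {x x' : R} (hx : ∀ y, IsUnit (1 - y * x)) (hx' : ∀ y, IsUnit (1 - y * x')) :
    ∀ y, IsUnit (1 - y * (x + x')) := by
  intro y
  obtain ⟨u, hu⟩ := hx y
  have h2 : IsUnit (1 - (↑u⁻¹ * y) * x') := hx' _
  have key : 1 - y * (x + x') = ↑u * (1 - (↑u⁻¹ * y) * x') := by
    have e1 : (↑u : R) * (1 - (↑u⁻¹ * y) * x') = ↑u - (↑u * ↑u⁻¹) * (y * x') := by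
      noncomm_ring
    rw [e1, Units.mul_inv, one_mul, hu]
    noncomm_ring
  rw [key]
  exact u.isUnit.mul h2

variable {ε : Sort*}

/-- Words of length `n+1` in right multiples of the `c e`. -/
def wrd (c : ε → R) : ℕ → Set R
  | 0 => {z | ∃ e ψ, z = c e * ψ}
  | (n + 1) => {z | ∃ e ψ w, w ∈ wrd c n ∧ z = (c e * ψ) * w}

/-- The span of words of length `n+1`. -/
def wrdP (c : ε → R) (n : ℕ) : Ideal R := Ideal.span (wrd c n)

theorem mem_wrdP_mul {c : ε → R} {n : ℕ} {x : R} (hx : x ∈ wrdP c n) (e : ε) (ψ : R) :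
    (c e * ψ) * x ∈ wrdP c (n + 1) := by
  induction hx using Submodule.span_induction generalizing ψ with
  | mem w hw => exact Ideal.subset_span ⟨e, ψ, w, hw, rfl⟩
  | zero => rw [mul_zero]; exact zero_mem _
  | add a b _ _ ha hb => rw [mul_add]; exact add_mem (ha ψ) (hb ψ)
  | smul r a _ ha =>
    have h : (c e * ψ) * (r • a) = (c e * (ψ * r)) * a := by
      rw [smul_eq_mul]; noncomm_ring
    rw [h]; exact ha (ψ * r)

theorem wrdP_succ_le {c : ε → R} {n : ℕ} : wrdP c (n + 1) ≤ wrdP c n := by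
  rw [wrdP, Ideal.span_le]
  rintro z ⟨e, ψ, w, hw, rfl⟩
  have := (wrdP c n).smul_mem (c e * ψ) (Ideal.subset_span hw)
  rwa [smul_eq_mul] at this

theorem wrdP_antitone {c : ε → R} : ∀ {a b : ℕ}, a ≤ b → wrdP c b ≤ wrdP c a := by
  intro a b hab
  induction hab with
  | refl => exact le_rfl
  | step _ ih => exact le_trans wrdP_succ_le ih

theorem wrdP_jq {c : ε → R} (hnil : ∀ e ψ, IsNilpotent (ψ * c e)) {n : ℕ} {x : R}
    (hx : x ∈ wrdP c n) : ∀ y, IsUnit (1 - y * x) := by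
  have hx0 : x ∈ wrdP c 0 := wrdP_antitone (Nat.zero_le n) hx
  clear hx
  induction hx0 using Submodule.span_induction with
  | mem w hw =>
    obtain ⟨e, ψ, rfl⟩ := hw
    intro y
    refine IsNilpotent.isUnit_one_sub ?_
    have h1 : IsNilpotent (ψ * (y * c e)) := by
      have := hnil e (ψ * y); rwa [mul_assoc] at this
    have h2 := isNilpotent_mul_swap h1
    rwa [mul_assoc] at h2
  | zero => intro y; simp
  | add a b _ _ ha hb => exact jq_add ha hb
  | smul r a _ ha =>
    intro y
    have h : y * (r • a) = (y * r) * a := by rw [smul_eq_mul, mul_assoc]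
    rw [h]; exact ha (y * r)

theorem wrd_split {c : ε → R} : ∀ (a : ℕ) {b : ℕ} {z : R}, z ∈ wrd c (a + b + 1) →
    ∃ w₁ ∈ wrd c a, ∃ w₂ ∈ wrd c b, z = w₁ * w₂ := by
  intro a
  induction a with
  | zero =>
    intro b z hz
    rw [Nat.zero_add] at hz
    obtain ⟨e, ψ, w, hw, rfl⟩ := hz
    exact ⟨c e * ψ, ⟨e, ψ, rfl⟩, w, hw, rfl⟩
  | succ a ih =>
    intro b z hz
    have hz' : z ∈ wrd c ((a + b + 1) + 1) := by
      have : a + 1 + b + 1 = (a + b + 1) + 1 := by omega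
      rwa [this] at hz
    obtain ⟨e, ψ, w, hw, rfl⟩ := hz'
    obtain ⟨w₁, hw₁, w₂, hw₂, rfl⟩ := ih hw
    exact ⟨(c e * ψ) * w₁, ⟨e, ψ, w₁, hw₁, rfl⟩, w₂, hw₂, (mul_assoc _ _ _).symm⟩

/-- Main nilpotency lemma: if all left multiples of the `c e` are nilpotent,
then there is a nonzero `φ` annihilated by all `c e` on the left. -/
theorem exists_annihilated (hart : IsArtinian R R) [Nontrivial R] (c : ε → R)
    (hnil : ∀ e ψ, IsNilpotent (ψ * c e)) : ∃ φ : R, φ ≠ 0 ∧ ∀ e, c e * φ = 0 := by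
  classical
  haveI := hart
  obtain ⟨m, hm⟩ := IsArtinian.monotone_stabilizes (M := R)
    (⟨fun n => OrderDual.toDual (wrdP c n), fun a b hab => wrdP_antitone hab⟩ : ℕ →o (Ideal R)ᵒᵈ)
  by_cases hbot : wrdP c m = ⊥
  · have hex : ∃ p, wrdP c p = ⊥ := ⟨m, hbot⟩
    rcases hp : Nat.find hex with _ | q
    · have h0 : wrdP c 0 = ⊥ := hp ▸ Nat.find_spec hex
      refine ⟨1, one_ne_zero, fun e => ?_⟩
      have h1 : c e * 1 ∈ wrdP c 0 := Ideal.subset_span ⟨e, 1, rfl⟩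
      rw [h0] at h1
      simpa using h1
    · have hq : wrdP c q ≠ ⊥ := Nat.find_min hex (by omega)
      obtain ⟨φ, hφ, hφ0⟩ := (wrdP c q).ne_bot_iff.mp hq
      refine ⟨φ, hφ0, fun e => ?_⟩
      have h1 : (c e * 1) * φ ∈ wrdP c (q + 1) := mem_wrdP_mul hφ e 1
      rw [← hp, Nat.find_spec hex] at h1
      simpa using h1
  · exfalso
    have hSb2m : wrdP c m = wrdP c (m + m + 1) := hm (m + m + 1) (by omega)
    set Sb := wrdP c m with hSbdef
    have hS : Sb ∈ {I : Ideal R | ∃ s ∈ Sb, ∃ x ∈ I, s * x ≠ 0} := by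
      by_contra hcon
      simp only [Set.mem_setOf_eq, not_exists, not_and, ne_eq, not_not] at hcon
      apply hbot
      rw [hSb2m]
      unfold wrdP
      rw [Ideal.span_eq_bot]
      intro z hz
      obtain ⟨w₁, hw₁, w₂, hw₂, rfl⟩ := wrd_split m hz
      exact hcon w₁ (Ideal.subset_span hw₁) w₂ (Ideal.subset_span hw₂)
    obtain ⟨I, hI, hminI⟩ := IsArtinian.set_has_minimal
      {I : Ideal R | ∃ s ∈ Sb, ∃ x ∈ I, s * x ≠ 0} ⟨Sb, hS⟩
    obtain ⟨s₀, hs₀, x, hxI, hsx⟩ := hI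
    have hdp : ∃ a ∈ Sb, ∃ b ∈ Sb, a * (b * x) ≠ 0 := by
      by_contra hcon
      simp only [not_exists, not_and, ne_eq, not_not] at hcon
      apply hsx
      have key : ∀ z, z ∈ wrdP c (m + m + 1) → z * x = 0 := by
        intro z hz
        induction hz using Submodule.span_induction with
        | mem w hw =>
          obtain ⟨w₁, hw₁, w₂, hw₂, rfl⟩ := wrd_split m hw
          rw [mul_assoc]
          exact hcon w₁ (Ideal.subset_span hw₁) w₂ (Ideal.subset_span hw₂)
        | zero => rw [zero_mul]
        | add a b _ _ ha hb => rw [add_mul, ha, hb, add_zero]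
        | smul r a _ ha => rw [smul_eq_mul, mul_assoc, ha, mul_zero]
      exact key s₀ (hSb2m ▸ hs₀)
    set J' := Submodule.map (LinearMap.toSpanSingleton R R x) Sb with hJ'def
    have hJ'mem : ∀ s ∈ Sb, s * x ∈ J' := fun s hs =>
      ⟨s, hs, by rw [LinearMap.toSpanSingleton_apply, smul_eq_mul]⟩
    have hJ'S : J' ∈ {I : Ideal R | ∃ s ∈ Sb, ∃ x ∈ I, s * x ≠ 0} := by
      obtain ⟨a, ha, b, hb, hab⟩ := hdp
      exact ⟨a, ha, b * x, hJ'mem b hb, hab⟩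
    have hJ'le : J' ≤ I := by
      rintro _ ⟨s, hs, rfl⟩
      rw [LinearMap.toSpanSingleton_apply]
      exact I.smul_mem s hxI
    have hJ'I : J' = I := by
      rcases eq_or_lt_of_le hJ'le with h | h
      · exact h
      · exact absurd h (hminI J' hJ'S)
    have hxJ : x ∈ J' := hJ'I ▸ hxI
    obtain ⟨s, hsSb, hs_eq⟩ := hxJ
    have hu : IsUnit (1 - s) := by
      have := wrdP_jq hnil hsSb 1
      rwa [one_mul] at this
    have hsxx : s * x = x := by
      rw [LinearMap.toSpanSingleton_apply, smul_eq_mul] at hs_eq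
      exact hs_eq
    have h1 : (1 - s) * x = 0 := by rw [sub_mul, one_mul, hsxx, sub_self]
    obtain ⟨u, hu'⟩ := hu
    have hx0 : x = 0 := by
      calc x = ↑u⁻¹ * (↑u * x) := by rw [← mul_assoc, Units.inv_mul, one_mul]
      _ = 0 := by rw [hu', h1, mul_zero]
    exact hsx (by rw [hx0, mul_zero])

end RingAux

/-! ### Retracts, Fitting decomposition, indecomposables -/

section FittingAux

open LinearMap

variable {L : Type v} [Ring L]

/-- `X` is a retract (direct summand) of `W`. -/
def IsRetract (L : Type v) [Ring L] (X W : Type v) [AddCommGroup X] [Module L X]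
    [AddCommGroup W] [Module L W] : Prop :=
  ∃ (α : X →ₗ[L] W) (σ : W →ₗ[L] X), σ ∘ₗ α = LinearMap.id

variable {Y : Type v} [AddCommGroup Y] [Module L Y]

theorem retract_of_not_nilpotent {X : Type v} [AddCommGroup X] [Module L X]
    [IsNoetherian L Y] [IsArtinian L Y] (hX : Indec L X)
    (g : Y →ₗ[L] X) (h : X →ₗ[L] Y) (ψ : Y →ₗ[L] Y)
    (hw : ¬ IsNilpotent ((ψ ∘ₗ h ∘ₗ g : Y →ₗ[L] Y) : Module.End L Y)) : IsRetract L X Y := by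
  classical
  set w : Module.End L Y := ψ ∘ₗ h ∘ₗ g with hwdef
  obtain ⟨n₀, hn₀ : ∀ m, n₀ ≤ m → LinearMap.range (w ^ n₀) = LinearMap.range (w ^ m)⟩ :=
    IsArtinian.monotone_stabilizes w.iterateRange
  obtain ⟨n₁, hn₁⟩ := Filter.eventually_atTop.mp w.eventually_isCompl_ker_pow_range_pow
  set n : ℕ := n₀ + n₁ + 1 with hndef
  have hcompl : IsCompl (LinearMap.ker (w ^ n)) (LinearMap.range (w ^ n)) :=
    hn₁ n (by omega)
  have hr : LinearMap.range (w ^ n) = LinearMap.range (w ^ (n + n)) :=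
    (hn₀ n (by omega)).symm.trans (hn₀ (n + n) (by omega))
  have hwn : (w ^ n) ≠ 0 := fun hc => hw ⟨n, hc⟩
  set Rp : Submodule L Y := LinearMap.range (w ^ n) with hRdef
  have hstab : ∀ x : Y, x ∈ Rp → (w ^ n) x ∈ Rp := fun x _ => LinearMap.mem_range_self _ x
  set s : Rp →ₗ[L] Rp := (w ^ n).restrict hstab with hsdef
  have hsinj : Function.Injective s := by
    intro x y hxy
    have hker : ((w ^ n) (↑x - ↑y) : Y) = 0 := by
      have : ((w ^ n) ↑x : Y) = (w ^ n) ↑y := by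
        have := congrArg (Subtype.val) hxy
        simpa [hsdef, LinearMap.restrict_apply] using this
      rw [map_sub, this, sub_self]
    have hmem : (↑x - ↑y : Y) ∈ LinearMap.ker (w ^ n) ⊓ Rp := by
      exact ⟨hker, sub_mem x.2 y.2⟩
    have := hcompl.disjoint.le_bot hmem
    rw [Submodule.mem_bot, sub_eq_zero] at this
    exact Subtype.ext this
  have hssurj : Function.Surjective s := by
    rintro ⟨y, hy⟩
    have hy2 : y ∈ LinearMap.range (w ^ (n + n)) := by rw [← hr]; exact hy
    obtain ⟨u, hu⟩ := hy2
    refine ⟨⟨(w ^ n) u, LinearMap.mem_range_self _ u⟩, ?_⟩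
    apply Subtype.ext
    have : ((w ^ n) ((w ^ n) u) : Y) = y := by
      rw [← hu, ← Module.End.mul_apply, ← pow_add]
    simpa [hsdef, LinearMap.restrict_apply] using this
  set se : Rp ≃ₗ[L] Rp := LinearEquiv.ofBijective s ⟨hsinj, hssurj⟩ with hsedef
  set π : Y →ₗ[L] Rp := Rp.projectionOnto _ hcompl.symm with hπdef
  set B : Y →ₗ[L] Y := Rp.subtype ∘ₗ (se.symm : Rp ≃ₗ[L] Rp).toLinearMap ∘ₗ π with hBdef
  have hBR : ∀ y : Y, B y ∈ Rp := fun y => (se.symm (π y)).2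
  set e : Y →ₗ[L] Y := B ∘ₗ (w ^ n : Module.End L Y) with hedef
  have heR : ∀ y : Y, e y ∈ Rp := fun y => hBR _
  -- e fixes Rp pointwise
  have hfix : ∀ x : Y, x ∈ Rp → e x = x := by
    intro x hx
    have hπx : π ((w ^ n) x) = s ⟨x, hx⟩ := by
      have hmem : (w ^ n) x ∈ Rp := LinearMap.mem_range_self _ x
      have := Submodule.linearProjOfIsCompl_apply_left hcompl.symm ⟨(w ^ n) x, hmem⟩
      rw [hπdef]
      rw [this]
      apply Subtype.ext
      simp [hsdef, LinearMap.restrict_apply]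
    have : e x = ↑(se.symm (s ⟨x, hx⟩)) := by
      simp only [hedef, hBdef, LinearMap.comp_apply, LinearEquiv.coe_coe, Submodule.coe_subtype]
      rw [hπx]
    rw [this]
    have : se.symm (s ⟨x, hx⟩) = ⟨x, hx⟩ := by
      have hse : se ⟨x, hx⟩ = s ⟨x, hx⟩ := rfl
      rw [← hse, LinearEquiv.symm_apply_apply]
    rw [this]
  have hee : e ∘ₗ e = e := by
    apply LinearMap.ext
    intro y
    exact hfix (e y) (heR y)
  have hene : e ≠ 0 := by
    intro hc
    obtain ⟨y, hy⟩ : ∃ y, (w ^ n) y ≠ 0 := by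
      by_contra hall
      push_neg at hall
      exact hwn (LinearMap.ext hall)
    apply hy
    have h1 : e y = 0 := by rw [hc]; rfl
    -- e y = se.symm ⟨w^n y, _⟩ coerced; injectivity
    have hmem : (w ^ n) y ∈ Rp := LinearMap.mem_range_self _ y
    have h2 : e y = ↑(se.symm (π ((w ^ n) y))) := rfl
    have hπy : π ((w ^ n) y) = ⟨(w ^ n) y, hmem⟩ :=
      Submodule.linearProjOfIsCompl_apply_left hcompl.symm ⟨(w ^ n) y, hmem⟩
    rw [h2, hπy] at h1
    have h3 : se.symm ⟨(w ^ n) y, hmem⟩ = 0 := by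
      apply Subtype.ext; simpa using h1
    have h4 : (⟨(w ^ n) y, hmem⟩ : Rp) = 0 := by
      have := congrArg se h3
      rwa [LinearEquiv.apply_symm_apply, map_zero] at this
    simpa using congrArg Subtype.val h4
  -- factor e through X
  obtain ⟨k, hk⟩ : ∃ k, n = k + 1 := ⟨n₀ + n₁, rfl⟩
  set α : X →ₗ[L] Y := B ∘ₗ (w ^ k : Module.End L Y) ∘ₗ ψ ∘ₗ h with hαdef
  have hαβ : α ∘ₗ g = e := by
    rw [hedef, hαdef, hk, pow_succ]
    apply LinearMap.ext
    intro y
    simp [hwdef, Module.End.mul_apply]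
  have hαR : ∀ x : X, α x ∈ Rp := fun x => hBR _
  set u : X →ₗ[L] X := g ∘ₗ α with hudef
  have huu : u ∘ₗ u = u := by
    apply LinearMap.ext
    intro x
    have h1 : α (g (α x)) = e (α x) := congrFun (congrArg DFunLike.coe hαβ) (α x)
    have h2 : e (α x) = α x := hfix _ (hαR x)
    simp only [hudef, LinearMap.comp_apply]
    rw [h1, h2]
  rcases hX.2 u huu with hu0 | hu1
  · exfalso
    apply hene
    have : e ∘ₗ e = α ∘ₗ u ∘ₗ g := by
      rw [← hαβ]
      rw [hudef]
      ext y
      simp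
    rw [hee] at this
    rw [this, hu0]
    ext y
    simp
  · exact ⟨α, g, hu1⟩

/-- Every endomorphism of a finite-length indecomposable module is nilpotent or bijective. -/
theorem nilpotent_or_isUnit [IsNoetherian L Y] [IsArtinian L Y] (hY : Indec L Y)
    (u : Module.End L Y) : IsNilpotent u ∨ IsUnit u := by
  obtain ⟨n₁, hn₁⟩ := Filter.eventually_atTop.mp u.eventually_isCompl_ker_pow_range_pow
  set n : ℕ := n₁ + 1 with hndef
  have hcompl : IsCompl (LinearMap.ker (u ^ n)) (LinearMap.range (u ^ n)) := hn₁ n (by omega)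
  set Rp : Submodule L Y := LinearMap.range (u ^ n) with hRdef
  set π : Y →ₗ[L] Rp := Rp.projectionOnto _ hcompl.symm with hπdef
  set e : Y →ₗ[L] Y := Rp.subtype ∘ₗ π with hedef
  have hfix : ∀ x : Y, x ∈ Rp → e x = x := by
    intro x hx
    have := Submodule.linearProjOfIsCompl_apply_left hcompl.symm ⟨x, hx⟩
    simp only [hedef, LinearMap.comp_apply, Submodule.coe_subtype, hπdef]
    rw [this]
  have hker0 : ∀ x : Y, x ∈ LinearMap.ker (u ^ n) → e x = 0 := by
    intro x hx
    have := Submodule.linearProjOfIsCompl_apply_right hcompl.symm ⟨x, hx⟩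
    simp only [hedef, LinearMap.comp_apply, Submodule.coe_subtype, hπdef]
    rw [this]
    rfl
  have hee : e ∘ₗ e = e := by
    apply LinearMap.ext
    intro y
    exact hfix (e y) (π y).2
  rcases hY.2 e hee with h0 | h1
  · left
    refine ⟨n, ?_⟩
    have : Rp = ⊥ := by
      rw [Submodule.eq_bot_iff]
      intro x hx
      rw [← hfix x hx, h0]
      rfl
    rw [hRdef] at this
    exact LinearMap.range_eq_bot.mp this
  · right
    rw [Module.End.isUnit_iff]
    have hkerbot : LinearMap.ker (u ^ n) = ⊥ := by
      rw [Submodule.eq_bot_iff]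
      intro x hx
      have := hker0 x hx
      rw [h1] at this
      simpa using this
    have hrangetop : LinearMap.range (u ^ n) = ⊤ := by
      have := hcompl.codisjoint
      rw [codisjoint_iff, hkerbot, bot_sup_eq] at this
      exact this
    constructor
    · rw [← LinearMap.ker_eq_bot]
      rw [Submodule.eq_bot_iff]
      intro x hx
      have hxn : x ∈ LinearMap.ker (u ^ n) := by
        rw [LinearMap.mem_ker, hndef, pow_succ, Module.End.mul_apply]
        rw [LinearMap.mem_ker] at hx
        rw [hx, map_zero]
      rw [hkerbot] at hxn
      simpa using hxn
    · intro y
      have : y ∈ LinearMap.range (u ^ n) := hrangetop ▸ Submodule.mem_top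
      obtain ⟨x, hx⟩ := this
      refine ⟨(u ^ n₁) x, ?_⟩
      rw [← hx, hndef, pow_succ', Module.End.mul_apply]

/-- In the endomorphism ring of a nontrivial module where every endomorphism is
nilpotent or invertible, a finite sum being invertible forces one summand invertible. -/
theorem exists_isUnit_of_isUnit_sum {X : Type v} [AddCommGroup X] [Module L X] [Nontrivial X]
    (hnu : ∀ z : Module.End L X, IsNilpotent z ∨ IsUnit z)
    {ι : Type*} (t : Finset ι) (f : ι → Module.End L X) (hs : IsUnit (∑ i ∈ t, f i)) :
    ∃ i ∈ t, IsUnit (f i) := by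
  classical
  induction t using Finset.induction_on generalizing f with
  | empty =>
    exfalso
    rw [Finset.sum_empty, isUnit_zero_iff] at hs
    obtain ⟨x, hx⟩ := exists_ne (0 : X)
    apply hx
    calc x = (1 : Module.End L X) x := rfl
    _ = (0 : Module.End L X) x := by rw [hs]
    _ = 0 := rfl
  | @insert a t ha ih =>
    obtain ⟨w, hw⟩ := hs
    set f' : ι → Module.End L X := fun i => ↑w⁻¹ * f i with hf'def
    have hsum' : ∑ i ∈ insert a t, f' i = 1 := by
      rw [hf'def, ← Finset.mul_sum, ← hw, Units.inv_mul]
    rcases hnu (f' a) with hnil | hunit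
    · have htail : IsUnit (∑ i ∈ t, f' i) := by
        have : ∑ i ∈ t, f' i = 1 - f' a := by
          rw [Finset.sum_insert ha] at hsum'
          exact eq_sub_of_add_eq' hsum'
        rw [this]
        exact IsNilpotent.isUnit_one_sub hnil
      obtain ⟨i, hit, hiu⟩ := ih f' htail
      refine ⟨i, Finset.mem_insert_of_mem hit, ?_⟩
      have : f i = ↑w * f' i := by rw [hf'def, ← mul_assoc, Units.mul_inv, one_mul]
      rw [this]
      exact w.isUnit.mul hiu
    · refine ⟨a, Finset.mem_insert_self a t, ?_⟩
      have : f a = ↑w * f' a := by rw [hf'def, ← mul_assoc, Units.mul_inv, one_mul]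
      rw [this]
      exact w.isUnit.mul hunit

/-- An indecomposable retract of a finite product of indecomposables is
isomorphic to one of the factors. -/
theorem retract_pi_equiv {ι : Type} [Fintype ι] (A : ι → Type v)
    [∀ a, AddCommGroup (A a)] [∀ a, Module L (A a)] (hA : ∀ a, Indec L (A a))
    {X : Type v} [AddCommGroup X] [Module L X] (hX : Indec L X)
    (hnu : ∀ z : Module.End L X, IsNilpotent z ∨ IsUnit z)
    (hr : IsRetract L X (∀ a, A a)) : ∃ a, Nonempty (X ≃ₗ[L] A a) := by
  classical
  haveI : Nontrivial X := not_subsingleton_iff_nontrivial.mp hX.1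
  obtain ⟨α, σ, hσα⟩ := hr
  set vv : ι → Module.End L X :=
    fun a => σ ∘ₗ (LinearMap.single L A a) ∘ₗ (LinearMap.proj a) ∘ₗ α with hvdef
  have hsum : ∑ a, vv a = (1 : Module.End L X) := by
    apply LinearMap.ext
    intro x
    rw [LinearMap.sum_apply]
    have h1 : ∀ a, vv a x = σ (Pi.single a (α x a)) := fun a => rfl
    simp_rw [h1]
    rw [← map_sum σ]
    have h2 : (∑ a, Pi.single a (α x a)) = α x := by
      funext b
      rw [Finset.sum_apply]
      simp [Pi.single_apply]
    rw [h2]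
    have := congrFun (congrArg DFunLike.coe hσα) x
    simpa using this
  have hex : ∃ a ∈ (Finset.univ : Finset ι), IsUnit (vv a) :=
    exists_isUnit_of_isUnit_sum hnu Finset.univ vv (by rw [hsum]; exact isUnit_one)
  obtain ⟨a, -, hau⟩ := hex
  obtain ⟨w, hw⟩ := hau
  set α' : X →ₗ[L] A a := (LinearMap.proj a) ∘ₗ α with hα'def
  set σ' : A a →ₗ[L] X := (↑w⁻¹ : Module.End L X) ∘ₗ σ ∘ₗ (LinearMap.single L A a) with hσ'def
  have hσ'α' : σ' ∘ₗ α' = LinearMap.id := by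
    have h1 : (↑w⁻¹ * vv a : Module.End L X) = 1 := by rw [← hw, Units.inv_mul]
    apply LinearMap.ext
    intro x
    simp only [LinearMap.comp_apply]
    have h2 : σ' (α' x) = (↑w⁻¹ * vv a : Module.End L X) x := rfl
    rw [h2, h1]
    rfl
  set e' : Module.End L (A a) := α' ∘ₗ σ' with he'def
  have he'e' : e' ∘ₗ e' = e' := by
    apply LinearMap.ext
    intro z
    have h1 : σ' (α' (σ' z)) = σ' z := by
      have := congrFun (congrArg DFunLike.coe hσ'α') (σ' z)
      simpa using this
    show α' (σ' (α' (σ' z))) = α' (σ' z)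
    rw [h1]
  rcases (hA a).2 e' he'e' with h0 | h1
  · exfalso
    obtain ⟨x, hx⟩ := exists_ne (0 : X)
    apply hx
    have hxa : x = σ' (α' x) := by
      have := congrFun (congrArg DFunLike.coe hσ'α') x
      simpa using this.symm
    have h2 : α' x = e' (α' x) := by
      show α' x = α' (σ' (α' x))
      rw [← hxa]
    rw [h0] at h2
    have h3 : α' x = 0 := by simpa using h2
    rw [hxa, h3, map_zero]
  · have hae : α' ∘ₗ σ' = LinearMap.id := by rw [← he'def]; exact h1
    exact ⟨a, ⟨LinearEquiv.ofLinear α' σ' hae hσ'α'⟩⟩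

end FittingAux

/-! ### Decomposition into indecomposables -/

section DecompAux

variable {L : Type v} [Ring L]

/-- Product of two Pi modules as a Pi module over a sum type. -/
def prodPiSumEquiv {ι κ : Type} (C : ι ⊕ κ → Type v)
    [∀ s, AddCommGroup (C s)] [∀ s, Module L (C s)] :
    ((∀ i, C (Sum.inl i)) × (∀ j, C (Sum.inr j))) ≃ₗ[L] (∀ s, C s) where
  toFun p := fun st => Sum.rec (fun i => p.1 i) (fun j => p.2 j) st
  map_add' p q := by funext st; rcases st with i | j <;> rfl
  map_smul' c p := by funext st; rcases st with i | j <;> rfl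
  invFun q := (fun i => q (Sum.inl i), fun j => q (Sum.inr j))
  left_inv p := rfl
  right_inv q := by funext st; rcases st with i | j <;> rfl

variable {Y : Type v} [AddCommGroup Y] [Module L Y]

theorem exists_indec_decomposition [IsNoetherian L Y] [IsArtinian L Y] (N : Submodule L Y) :
    ∃ (ι : Type) (_ : Fintype ι) (A : ι → Submodule L Y), (∀ a, Indec L (A a)) ∧
      Nonempty ((N : Type v) ≃ₗ[L] ∀ a, (A a : Type v)) := by
  classical
  refine (wellFounded_lt :
      WellFounded ((· < ·) : Submodule L Y → Submodule L Y → Prop)).induction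
    (C := fun N => ∃ (ι : Type) (_ : Fintype ι) (A : ι → Submodule L Y),
      (∀ a, Indec L (A a)) ∧ Nonempty ((N : Type v) ≃ₗ[L] ∀ a, (A a : Type v))) N ?_
  clear N
  intro N IH
  by_cases h1 : Subsingleton (N : Type v)
  · refine ⟨Empty, inferInstance, fun a => a.elim, fun a => a.elim, ⟨?_⟩⟩
    exact LinearEquiv.ofLinear 0 0
      (LinearMap.ext fun x => Subsingleton.elim _ _)
      (LinearMap.ext fun x => Subsingleton.elim _ _)
  by_cases h2 : Indec L (N : Type v)
  · exact ⟨PUnit, inferInstance, fun _ => N, fun _ => h2,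
      ⟨(LinearEquiv.funUnique PUnit L (N : Type v)).symm⟩⟩
  · rw [Indec, not_and_or] at h2
    rcases h2 with h2 | h2
    · exact absurd h1 h2
    push_neg at h2
    obtain ⟨e, he, hne⟩ := h2
    obtain ⟨hne0, hneid⟩ := hne
    have hee : ∀ x, e (e x) = e x := fun x => congrFun (congrArg DFunLike.coe he) x
    have hcompl : IsCompl (LinearMap.ker e) (LinearMap.range e) := by
      constructor
      · rw [Submodule.disjoint_def]
        intro x hk hr
        obtain ⟨y, hy⟩ := hr
        have : e x = x := by rw [← hy, hee]
        rw [LinearMap.mem_ker] at hk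
        rw [← this, hk]
      · rw [codisjoint_iff, Submodule.eq_top_iff']
        intro x
        rw [Submodule.mem_sup]
        refine ⟨x - e x, ?_, e x, LinearMap.mem_range_self e x, by abel⟩
        rw [LinearMap.mem_ker, map_sub, hee, sub_self]
    set Kp := (LinearMap.ker e).map N.subtype with hKdef
    set Rp := (LinearMap.range e).map N.subtype with hRdef
    have hKlt : Kp < N := by
      refine lt_of_le_of_ne (Submodule.map_subtype_le N _) (fun hc => hne0 ?_)
      have h3 : LinearMap.ker e = Submodule.comap N.subtype Kp :=
        (Submodule.comap_map_eq_of_injective N.injective_subtype _).symm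
      rw [hc, Submodule.comap_subtype_self] at h3
      exact LinearMap.ker_eq_top.mp h3
    have hRlt : Rp < N := by
      refine lt_of_le_of_ne (Submodule.map_subtype_le N _) (fun hc => hneid ?_)
      have h3 : LinearMap.range e = Submodule.comap N.subtype Rp :=
        (Submodule.comap_map_eq_of_injective N.injective_subtype _).symm
      rw [hc, Submodule.comap_subtype_self] at h3
      have hsurj : Function.Surjective e := by
        rw [← LinearMap.range_eq_top]; exact h3
      apply LinearMap.ext
      intro x
      obtain ⟨y, hy⟩ := hsurj x
      rw [← hy, hee]
      rfl
    obtain ⟨ι₁, fι₁, A₁, hA₁, ⟨e₁⟩⟩ := IH Kp hKlt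
    obtain ⟨ι₂, fι₂, A₂, hA₂, ⟨e₂⟩⟩ := IH Rp hRlt
    haveI := fι₁; haveI := fι₂
    refine ⟨ι₁ ⊕ ι₂, inferInstance, Sum.elim A₁ A₂, ?_, ⟨?_⟩⟩
    · rintro (a | b)
      · exact hA₁ a
      · exact hA₂ b
    · have E1 : (LinearMap.ker e : Type v) ≃ₗ[L] Kp :=
        Submodule.equivMapOfInjective N.subtype N.injective_subtype _
      have E2 : (LinearMap.range e : Type v) ≃ₗ[L] Rp :=
        Submodule.equivMapOfInjective N.subtype N.injective_subtype _
      have E3 := prodPiSumEquiv (L := L) (ι := ι₁) (κ := ι₂)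
        (fun st => ((Sum.elim A₁ A₂ st : Submodule L Y) : Type v))
      exact ((Submodule.prodEquivOfIsCompl _ _ hcompl).symm.trans
        ((E1.trans e₁).prodCongr (E2.trans e₂))).trans E3

end DecompAux

/-! ### Finite length helpers -/

section FLAux

variable {L : Type v} [Ring L]

theorem fl_of_injective {X Y : Type v} [AddCommGroup X] [Module L X] [AddCommGroup Y]
    [Module L Y] (f : X →ₗ[L] Y) (hf : Function.Injective f) (hY : IsFiniteLength L Y) :
    IsFiniteLength L X := by
  obtain ⟨hn, ha⟩ := isFiniteLength_iff_isNoetherian_isArtinian.mp hY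
  rw [isFiniteLength_iff_isNoetherian_isArtinian]
  exact ⟨isNoetherian_of_injective f hf, isArtinian_of_injective f hf⟩

theorem fl_pi {κ : Type} [Finite κ] (Z : κ → Type v) [∀ j, AddCommGroup (Z j)]
    [∀ j, Module L (Z j)] (hZ : ∀ j, IsFiniteLength L (Z j)) :
    IsFiniteLength L (∀ j, Z j) := by
  haveI := fun j => (isFiniteLength_iff_isNoetherian_isArtinian.mp (hZ j)).1
  haveI := fun j => (isFiniteLength_iff_isNoetherian_isArtinian.mp (hZ j)).2
  haveI := Fintype.ofFinite κ
  rw [isFiniteLength_iff_isNoetherian_isArtinian]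
  exact ⟨inferInstance, inferInstance⟩

end FLAux

/-- if `S_M` is minimal infinite submodule-closed, then `M` is not of
finite type. -/
theorem minimal_not_finiteType
    (k : Type v) [CommRing k] [IsArtinianRing k]
    (L : Type v) [Ring L] [Algebra k L] [Module.Finite k L]
    (M : Type v) [AddCommGroup M] [Module L M]
    (hmin : IsMinimalInf L (SMod L M)) :
    ¬ IsFiniteType L M := by
  classical
  rintro ⟨ι, N, hNfl, ⟨n, Yc, hYc⟩, ⟨eM⟩⟩
  obtain ⟨hsubC, hinfC, hmaxC⟩ := hmin
  -- choose representatives of the isomorphism classes occurring in the decomposition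
  let κ : Type := {j : Fin n // ∃ i : ι, Nonempty ((N i : Type v) ≃ₗ[L] Yc j)}
  haveI : Fintype κ := by unfold κ; infer_instance
  let rep : κ → ι := fun j => j.2.choose
  have hrep : ∀ j : κ, Nonempty ((N (rep j) : Type v) ≃ₗ[L] Yc j.1) := fun j => j.2.choose_spec
  have hclass : ∀ i : ι, ∃ j : κ, Nonempty ((N i : Type v) ≃ₗ[L] (N (rep j) : Type v)) := by
    intro i
    obtain ⟨j0, hj0⟩ := hYc i
    refine ⟨⟨j0, ⟨i, hj0⟩⟩, ?_⟩
    obtain ⟨w⟩ := hrep ⟨j0, ⟨i, hj0⟩⟩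
    obtain ⟨u⟩ := hj0
    exact ⟨u.trans w.symm⟩
  set Ym : Type v := ∀ j : κ, (N (rep j) : Type v) with hYmdef
  -- each `N i` embeds into `M`
  have hNemb : ∀ i : ι, ∃ f : (N i : Type v) →ₗ[L] M, Function.Injective f := by
    intro i
    refine ⟨(eM.symm : DirectSum ι (fun i => (N i : Type v)) ≃ₗ[L] M).toLinearMap ∘ₗ
      DirectSum.lof L ι (fun i => (N i : Type v)) i, ?_⟩
    have hlof : Function.Injective (DirectSum.lof L ι (fun i => (N i : Type v)) i) := by
      intro a b hab
      have := congrArg (DirectSum.component L ι (fun i => (N i : Type v)) i) hab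
      rwa [DirectSum.component.lof_self, DirectSum.component.lof_self] at this
    intro a b hab
    simp only [LinearMap.coe_comp, Function.comp_apply, LinearEquiv.coe_coe] at hab
    exact hlof (eM.symm.injective hab)
  have hYmfl : IsFiniteLength L Ym := fl_pi _ (fun j => hNfl (rep j))
  haveI hYmnoeth : IsNoetherian L Ym := (isFiniteLength_iff_isNoetherian_isArtinian.mp hYmfl).1
  haveI hYmart : IsArtinian L Ym := (isFiniteLength_iff_isNoetherian_isArtinian.mp hYmfl).2
  -- `Ym` belongs to `S_M`
  have hYmC : SMod L M (ModuleCat.of L Ym) := by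
    refine ⟨hYmfl, ?_⟩
    rw [cogen_iff_cogenT]
    choose fi hfi using hNemb
    refine ⟨ULift.{v} κ, inferInstance,
      LinearMap.pi (fun j : ULift.{v} κ => (fi (rep j.down)) ∘ₗ LinearMap.proj j.down), ?_⟩
    intro a b hab
    funext j
    exact hfi (rep j) (congrFun hab (ULift.up j))
  -- everything in `S_M` is cogenerated by `Ym`
  have hCsub : ∀ X : ModuleCat.{v} L, SMod L M X → CogenT L Ym (X : Type v) := by
    intro X hX
    obtain ⟨hXfl, r, f0, hf0⟩ := hX
    haveI : DecidableEq ι := Classical.decEq ι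
    haveI : ∀ (i : ι) (x : (N i : Type v)), Decidable (x ≠ 0) := fun _ _ => Classical.dec _
    set DS := DirectSum ι (fun i => (N i : Type v)) with hDSdef
    set F : (X : Type v) →ₗ[L] (Fin r → DS) :=
      LinearMap.pi (fun a => (eM : M →ₗ[L] DS) ∘ₗ (LinearMap.proj a) ∘ₗ f0) with hFdef
    have hFa : ∀ x a, F x a = eM (f0 x a) := fun x a => rfl
    have hF : ∀ x : (X : Type v), F x = 0 → x = 0 := by
      intro x hx
      have h1 : f0 x = 0 := by
        funext a
        have h2 : eM (f0 x a) = 0 := by rw [← hFa x a, hx]; rfl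
        have := eM.injective (by rw [h2, map_zero] : eM (f0 x a) = eM 0)
        exact this
      have := hf0 (by rw [h1, map_zero] : f0 x = f0 0)
      simpa using this
    haveI : IsNoetherian L (X : Type v) :=
      (isFiniteLength_iff_isNoetherian_isArtinian.mp hXfl).1
    haveI : Module.Finite L (X : Type v) := ⟨IsNoetherian.noetherian ⊤⟩
    obtain ⟨sX, hsX⟩ := Module.Finite.fg_top (R := L) (M := (X : Type v))
    set S : Finset ι := sX.biUnion (fun x => (Finset.univ : Finset (Fin r)).biUnion
      (fun a => DFinsupp.support (F x a))) with hSdef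
    set W : Submodule L (X : Type v) :=
      { carrier := {x | ∀ (a : Fin r) (i : ι), i ∉ S → F x a i = 0}
        zero_mem' := by
          intro a i _
          rw [map_zero]
          rfl
        add_mem' := by
          intro x y hx hy a i hi
          rw [map_add]
          have : (F x + F y) a i = F x a i + F y a i := rfl
          rw [this, hx a i hi, hy a i hi, add_zero]
        smul_mem' := by
          intro l x hx a i hi
          rw [map_smul]
          have : (l • F x) a i = l • (F x a i) := rfl
          rw [this, hx a i hi, smul_zero] } with hWdef
    have hWtop : ∀ x : (X : Type v), ∀ (a : Fin r) (i : ι), i ∉ S → F x a i = 0 := by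
      have hle : Submodule.span L (↑sX) ≤ W := by
        rw [Submodule.span_le]
        intro x hx a i hi
        have hns : i ∉ DFinsupp.support (F x a) := by
          intro hmem
          exact hi (Finset.mem_biUnion.mpr ⟨x, hx,
            Finset.mem_biUnion.mpr ⟨a, Finset.mem_univ a, hmem⟩⟩)
        exact DFinsupp.notMem_support_iff.mp hns
      intro x
      exact hle (by rw [hsX]; trivial)
    choose ji hji using hclass
    have eqi : ∀ i : ι, (N i : Type v) ≃ₗ[L] (N (rep (ji i)) : Type v) := fun i => (hji i).some
    set H : (X : Type v) →ₗ[L] ((Fin r × ↥S) → Ym) :=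
      LinearMap.pi (fun p : Fin r × ↥S =>
        (LinearMap.single L (fun j : κ => (N (rep j) : Type v)) (ji ↑p.2)) ∘ₗ
        (eqi ↑p.2).toLinearMap ∘ₗ (DirectSum.component L ι (fun i => (N i : Type v)) ↑p.2) ∘ₗ
        (LinearMap.proj p.1) ∘ₗ F) with hHdef
    refine ⟨Fin r × ↥S, inferInstance, H, ?_⟩
    have hker : ∀ x : (X : Type v), H x = 0 → x = 0 := by
      intro x hx
      apply hF
      funext a
      refine DFinsupp.ext fun i => ?_
      show F x a i = (0 : DS) i
      have hzero : (0 : DS) i = 0 := rfl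
      rw [hzero]
      by_cases hi : i ∈ S
      · have h1 : H x (a, ⟨i, hi⟩) = 0 := by rw [hx]; rfl
        have h1' : Pi.single (M := fun j : κ => (N (rep j) : Type v)) (ji i)
            ((eqi i) ((DirectSum.component L ι (fun i => (N i : Type v)) i) (F x a))) = 0 := h1
        have h2 : (eqi i) ((DirectSum.component L ι (fun i => (N i : Type v)) i) (F x a)) = 0 := by
          have := congrFun h1' (ji i)
          rwa [Pi.single_eq_same] at this
        have h3 : (DirectSum.component L ι (fun i => (N i : Type v)) i) (F x a) = 0 :=
          (eqi i).injective (by rw [h2, map_zero])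
        rw [DirectSum.apply_eq_component L]
        exact h3
      · exact hWtop x a i hi
    intro x y hxy
    have h0 : x - y = 0 := hker _ (by rw [map_sub, hxy, sub_self])
    exact sub_eq_zero.mp h0
  -- if `Ym` is trivial, `S_M` has no indecomposables at all
  by_cases hYtriv : Subsingleton Ym
  · apply hinfC
    refine ⟨0, Fin.elim0, ?_⟩
    intro X hX hind
    exfalso
    obtain ⟨η, hη, f, hf⟩ := hCsub X hX
    have : Subsingleton (X : Type v) :=
      ⟨fun a b => hf (Subsingleton.elim _ _)⟩
    exact hind.1 this
  haveI hYmnt : Nontrivial Ym := not_subsingleton_iff_nontrivial.mp hYtriv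
  -- the candidate proper subcategory
  set QS : ModuleCat.{v} L → Prop := fun X => SMod L M X ∧ ∃ (τ : Type) (_ : Finite τ)
      (Xs : τ → ModuleCat.{v} L),
      (∀ i, SMod L M (Xs i) ∧ Indec L (Xs i) ∧ ¬ IsRetract L (Xs i : Type v) Ym) ∧
      CogenT L (∀ i, (Xs i : Type v)) (X : Type v) with hQSdef
  have hQSle : ∀ X, QS X → SMod L M X := fun X h => h.1
  have hQSsub : IsSubcat L QS := by
    constructor
    · intro X hX
      exact hsubC.finLength X hX.1
    · intro X X' hiso hX
      obtain ⟨hC, τ, hτ, Xs, hXs, hcog⟩ := hX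
      refine ⟨hsubC.isoClosed X X' hiso hC, τ, hτ, Xs, hXs, ?_⟩
      obtain ⟨eq⟩ := hiso
      exact cogenT_of_injective (eq.symm : (X' : Type v) ≃ₗ[L] (X : Type v)).toLinearMap
        eq.symm.injective hcog
    · intro X X' hX hX'
      obtain ⟨hC, τ, hτ, Xs, hXs, hcog⟩ := hX
      obtain ⟨hC', τ', hτ', Xs', hXs', hcog'⟩ := hX'
      haveI := hτ; haveI := hτ'
      refine ⟨hsubC.sumClosed X X' hC hC', τ ⊕ τ', inferInstance, Sum.elim Xs Xs', ?_, ?_⟩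
      · rintro (i | i)
        · exact hXs i
        · exact hXs' i
      · have pad1 : CogenT L (∀ s : τ ⊕ τ', ((Sum.elim Xs Xs' s : ModuleCat.{v} L) : Type v))
            (∀ i : τ, (Xs i : Type v)) := by
          refine cogenT_of_emb ?_ ?_
          · exact
              { toFun := fun w s => Sum.rec (fun i => w i) (fun j => 0) s
                map_add' := by intro a b; funext st; rcases st with i | j; exacts [rfl, (add_zero (0 : (Xs' j : Type v))).symm]
                map_smul' := by intro c a; funext st; rcases st with i | j; exacts [rfl, (smul_zero c : c • (0 : (Xs' j : Type v)) = 0).symm] }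
          · intro a b hab
            funext i
            exact congrFun hab (Sum.inl i)
        have pad2 : CogenT L (∀ s : τ ⊕ τ', ((Sum.elim Xs Xs' s : ModuleCat.{v} L) : Type v))
            (∀ i : τ', (Xs' i : Type v)) := by
          refine cogenT_of_emb ?_ ?_
          · exact
              { toFun := fun w s => Sum.rec (fun i => 0) (fun j => w j) s
                map_add' := by intro a b; funext st; rcases st with i | j; exacts [(add_zero (0 : (Xs i : Type v))).symm, rfl]
                map_smul' := by intro c a; funext st; rcases st with i | j; exacts [(smul_zero c : c • (0 : (Xs i : Type v)) = 0).symm, rfl] }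
          · intro a b hab
            funext j
            exact congrFun hab (Sum.inr j)
        exact cogenT_prod (cogenT_trans hcog pad1) (cogenT_trans hcog' pad2)
    · intro X hX Nsub
      obtain ⟨hC, τ, hτ, Xs, hXs, hcog⟩ := hX
      exact ⟨hsubC.submodClosed X hC Nsub, τ, hτ, Xs, hXs,
        cogenT_of_injective Nsub.subtype (Submodule.injective_subtype _) hcog⟩
  have hQmem : ∀ X : ModuleCat.{v} L, SMod L M X → Indec L X →
      ¬ IsRetract L (X : Type v) Ym → QS X := by
    intro X hX hind hnr
    refine ⟨hX, PUnit, inferInstance, fun _ => X, fun _ => ⟨hX, hind, hnr⟩, ?_⟩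
    refine ⟨PUnit.{v+1}, inferInstance, ?_, ?_⟩
    · exact { toFun := fun x _ _ => x
              map_add' := by intro a b; rfl
              map_smul' := by intro c a; rfl }
    · intro a b hab
      exact congrFun (congrFun hab PUnit.unit) PUnit.unit
  by_cases hQinf : InfiniteSubcat L QS
  · -- minimality forces `QS = S_M`; derive a contradiction via the endomorphism ring
    have hQeq : QS = SMod L M := hmaxC QS hQSle hQSsub hQinf
    have hYmQS : QS (ModuleCat.of L Ym) := by rw [hQeq]; exact hYmC
    obtain ⟨-, τ, hτ, Xs, hXs, hcog⟩ := hYmQS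
    haveI := hτ
    obtain ⟨η, hη, f, hf⟩ := hcog
    haveI := hη
    have hXsem := fun i : τ => hCsub (Xs i) (hXs i).1
    choose θ hθ g hg using hXsem
    haveI := hθ
    set ε : Type v := η × Σ i : τ, θ i with hεdef
    set gm : ∀ (a : η) (i : τ), Ym →ₗ[L] (Xs i : Type v) :=
      fun a i => (LinearMap.proj i) ∘ₗ (LinearMap.proj a) ∘ₗ f with hgmdef
    set hm : ∀ (i : τ) (b : θ i), (Xs i : Type v) →ₗ[L] Ym :=
      fun i b => (LinearMap.proj b) ∘ₗ (g i) with hhmdef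
    set cc : ε → Module.End L Ym := fun p => (hm p.2.1 p.2.2) ∘ₗ (gm p.1 p.2.1) with hccdef
    have hker : (⨅ e : ε, LinearMap.ker (cc e)) = ⊥ := by
      rw [Submodule.eq_bot_iff]
      intro y hy
      rw [Submodule.mem_iInf] at hy
      have hy' : ∀ (a : η) (i : τ) (b : θ i), g i (f y a i) b = 0 := by
        intro a i b
        exact hy (a, ⟨i, b⟩)
      have h1 : f y = 0 := by
        funext a
        funext i
        have h2 : g i (f y a i) = 0 := by
          funext b
          exact hy' a i b
        have := hg i (by rw [h2, map_zero] : g i (f y a i) = g i 0)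
        simpa using this
      have := hf (by rw [h1, map_zero] : f y = f 0)
      simpa using this
    by_cases hnil : ∀ (e : ε) (ψ : Module.End L Ym), IsNilpotent (ψ * cc e)
    · -- Lemma A situation
      have hart : IsArtinian (Module.End L Ym) (Module.End L Ym) := by
        letI instkY : Module k Ym := Module.compHom Ym (algebraMap k L)
        haveI : IsScalarTower k L Ym := IsScalarTower.of_algebraMap_smul (fun a y => rfl)
        haveI : SMulCommClass L k Ym := ⟨fun l a y => by
          show l • ((algebraMap k L a) • y) = (algebraMap k L a) • (l • y)
          rw [← mul_smul, ← mul_smul, Algebra.commutes]⟩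
        haveI : Module.Finite L Ym := ⟨IsNoetherian.noetherian ⊤⟩
        haveI : Module.Finite k Ym := Module.Finite.trans L Ym
        haveI : IsArtinian k Ym := isArtinian_of_fg_of_artinian'
        obtain ⟨sg, hsg⟩ := Module.Finite.fg_top (R := L) (M := Ym)
        set Φ : (Module.End L Ym) →ₗ[k] (↥sg → Ym) :=
          { toFun := fun φ => fun x => φ ↑x
            map_add' := by intro a b; funext x; rfl
            map_smul' := by intro a φ; funext x; rfl } with hΦdef
        have hΦ : Function.Injective Φ := by
          intro φ1 φ2 h
          have hker : ∀ x : Ym, x ∈ (⊤ : Submodule L Ym) → φ1 x = φ2 x := by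
            rw [← hsg]
            intro x hx
            induction hx using Submodule.span_induction with
            | mem z hz => exact congrFun h ⟨z, hz⟩
            | zero => rw [map_zero, map_zero]
            | add a b _ _ ha hb => rw [map_add, map_add, ha, hb]
            | smul l a _ ha => rw [map_smul, map_smul, ha]
          exact LinearMap.ext (fun x => hker x trivial)
        haveI hkE : IsArtinian k (Module.End L Ym) := isArtinian_of_injective Φ hΦ
        exact isArtinian_of_tower k hkE
      haveI : Nontrivial (Module.End L Ym) := by
        obtain ⟨y, hy⟩ := exists_ne (0 : Ym)
        refine ⟨1, 0, fun hc => hy ?_⟩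
        calc y = (1 : Module.End L Ym) y := rfl
        _ = (0 : Module.End L Ym) y := by rw [hc]
        _ = 0 := rfl
      obtain ⟨φ, hφ0, hφ⟩ := exists_annihilated hart cc hnil
      apply hφ0
      apply LinearMap.ext
      intro y
      have hmem : φ y ∈ ⨅ e : ε, LinearMap.ker (cc e) := by
        rw [Submodule.mem_iInf]
        intro e
        rw [LinearMap.mem_ker]
        calc cc e (φ y) = (cc e * φ) y := rfl
        _ = (0 : Module.End L Ym) y := by rw [hφ e]
        _ = 0 := rfl
      rw [hker] at hmem
      simpa using hmem
    · -- Lemma B situation: produces a forbidden retract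
      push_neg at hnil
      obtain ⟨e, ψ, hnn⟩ := hnil
      haveI : IsNoetherian L Ym := hYmnoeth
      haveI : IsArtinian L Ym := hYmart
      have hret : IsRetract L (Xs e.2.1 : Type v) Ym := by
        refine retract_of_not_nilpotent (hXs e.2.1).2.1 (gm e.1 e.2.1) (hm e.2.1 e.2.2) ψ ?_
        intro hc
        apply hnn
        have : (ψ * cc e : Module.End L Ym) = ψ ∘ₗ (hm e.2.1 e.2.2) ∘ₗ (gm e.1 e.2.1) := by
          rw [hccdef]
          rfl
        rw [this]
        exact hc
      exact (hXs e.2.1).2.2 hret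
  · -- `QS` has a finite cover; combine with the decomposition of `Ym` to cover all of `S_M`
    rw [InfiniteSubcat, not_not] at hQinf
    obtain ⟨m, G, hG⟩ := hQinf
    obtain ⟨ι₂, fι₂, A, hA, ⟨eYm0⟩⟩ := exists_indec_decomposition (⊤ : Submodule L Ym)
    haveI := fι₂
    have eYm : Ym ≃ₗ[L] ∀ a : ι₂, (A a : Type v) :=
      (Submodule.topEquiv (R := L) (M := Ym)).symm.trans eYm0
    set s₂ := Fintype.card ι₂ with hs₂def
    set eqι : ι₂ ≃ Fin s₂ := Fintype.equivFin ι₂ with heqιdef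
    set Gs : Fin (m + s₂) → ModuleCat.{v} L :=
      Fin.append G (fun b => ModuleCat.of L (A (eqι.symm b))) with hGsdef
    apply hinfC
    refine ⟨m + s₂, Gs, ?_⟩
    intro X hX hind
    by_cases hret : IsRetract L (X : Type v) Ym
    · -- indecomposable retract of `Ym`: isomorphic to one of the `A a`
      have hr' : IsRetract L (X : Type v) (∀ a : ι₂, (A a : Type v)) := by
        obtain ⟨α, σ, hσα⟩ := hret
        refine ⟨eYm.toLinearMap ∘ₗ α, σ ∘ₗ (eYm.symm : _ ≃ₗ[L] _).toLinearMap, ?_⟩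
        apply LinearMap.ext
        intro x
        have : σ (eYm.symm (eYm (α x))) = σ (α x) := by rw [LinearEquiv.symm_apply_apply]
        simpa [this] using congrFun (congrArg DFunLike.coe hσα) x
      have hXfl : IsFiniteLength L (X : Type v) := hsubC.finLength X hX
      haveI : IsNoetherian L (X : Type v) :=
        (isFiniteLength_iff_isNoetherian_isArtinian.mp hXfl).1
      haveI : IsArtinian L (X : Type v) :=
        (isFiniteLength_iff_isNoetherian_isArtinian.mp hXfl).2
      have hnu : ∀ z : Module.End L (X : Type v), IsNilpotent z ∨ IsUnit z :=
        nilpotent_or_isUnit hind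
      obtain ⟨a, ⟨ex⟩⟩ := retract_pi_equiv (fun a : ι₂ => (A a : Type v)) hA hind hnu hr'
      refine ⟨Fin.natAdd m (eqι a), ?_⟩
      have hGsval : Gs (Fin.natAdd m (eqι a)) = ModuleCat.of L (A (eqι.symm (eqι a))) := by
        rw [hGsdef, Fin.append_right]
      rw [hGsval, Equiv.symm_apply_apply]
      exact ⟨ex⟩
    · have hXQS : QS X := hQmem X hX hind hret
      obtain ⟨j, hj⟩ := hG X hXQS hind
      refine ⟨Fin.castAdd s₂ j, ?_⟩
      have hGsval : Gs (Fin.castAdd s₂ j) = G j := by rw [hGsdef, Fin.append_left]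
      rw [hGsval]
      exact hj
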